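/- Let f : Σ_N → Σ_N commute with the shift σ, with N ≥ 2. Suppose there exists a word w of length m ≥ 1 over the alphabet Fin N that does not occur in any jointly periodic point (a point periodic under both σ and f). Then limsup_{k→∞} P_k^{1/k} < N, where P_k is the number of points in Fix(σ^k) that are f-periodic. -/

import Mathlib

/-- The shift map on the full shift `ℤ → A`. -/
def shift {A : Type*} (x : ℤ → A) : ℤ → A := fun i => x (i + 1)

lemma shift_iterate {A : Type*} (k : ℕ) (x : ℤ → A) (i : ℤ) :
    shift^[k] x i = x (i + k) := by
  induction k generalizing i with
  | zero => simp
  | succ n ih =>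
    rw [Function.iterate_succ_apply', shift, ih]
    push_cast; ring_nf

lemma periodic_emod {A : Type*} {k : ℕ} (hk : 1 ≤ k) {x : ℤ → A}
    (hx : shift^[k] x = x) (n : ℤ) : x n = x (n % k) := by
  have hper : ∀ i : ℤ, x (i + k) = x i := by
    intro i
    conv_rhs => rw [← hx]
    rw [shift_iterate]
  have h : ∀ d : ℤ, ∀ i : ℤ, x (i + d * k) = x i := by
    intro d
    induction d using Int.induction_on with
    | zero => simp
    | succ d ih =>
      intro i
      have : i + (d + 1 : ℤ) * k = (i + d * k) + k := by ring
      rw [this, hper, ih]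
    | pred d ih =>
      intro i
      have e : i + (-(d:ℤ) - 1) * k = (i + (-(d:ℤ)) * k) - k := by ring
      rw [e]
      have h2 := hper ((i + (-(d:ℤ)) * k) - k)
      rw [sub_add_cancel] at h2
      rw [← h2]
      exact ih i
  have := h (n / k) (n % k)
  rw [← this]
  congr 1
  rw [mul_comm]
  have := Int.emod_add_mul_ediv n k
  linarith

theorem stmt15 {N : ℕ} (hN : 2 ≤ N) (f : (ℤ → Fin N) → (ℤ → Fin N))
    (hcomm : ∀ x, f (shift x) = shift (f x))
    (m : ℕ) (hm : 1 ≤ m) (w : Fin m → Fin N)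
    (hw : ∀ x : ℤ → Fin N, (∃ k, 1 ≤ k ∧ shift^[k] x = x) →
      (∃ p, 1 ≤ p ∧ f^[p] x = x) →
      ∀ i : ℤ, ¬ (∀ j : Fin m, x (i + ((j : ℕ) : ℤ)) = w j)) :
    Filter.limsup (fun k : ℕ =>
      ((({x : ℤ → Fin N | shift^[k] x = x ∧ ∃ p, 1 ≤ p ∧ f^[p] x = x}).ncard : ℕ) : ℝ)
        ^ ((k : ℝ)⁻¹)) Filter.atTop < N := by
  have hNR : (2:ℝ) ≤ (N:ℝ) := by exact_mod_cast hN
  have hNm1 : (1:ℝ) ≤ (N:ℝ)^m - 1 := by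
    have : (2:ℝ) ≤ (N:ℝ)^m := le_trans hNR (le_self_pow₀ (by linarith) (by omega))
    linarith
  set a : ℝ := ((N:ℝ)^m - 1) ^ ((m:ℝ)⁻¹) with ha_def
  have hmR : (0:ℝ) < (m:ℝ) := by exact_mod_cast hm
  have ha1 : (1:ℝ) ≤ a := Real.one_le_rpow hNm1 (by positivity)
  have ha0 : (0:ℝ) ≤ a := by linarith
  -- a < N
  have haN : a < N := by
    have h1 : a < ((N:ℝ)^m) ^ ((m:ℝ)⁻¹) :=
      Real.rpow_lt_rpow (by linarith) (by linarith) (by positivity)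
    have h2 : ((N:ℝ)^m) ^ ((m:ℝ)⁻¹) = N := by
      rw [← Real.rpow_natCast (N:ℝ) m, ← Real.rpow_mul (by linarith),
        mul_inv_cancel₀ (ne_of_gt hmR), Real.rpow_one]
    rwa [h2] at h1
  -- counting bound
  have key : ∀ k : ℕ, 1 ≤ k →
      (({x : ℤ → Fin N | shift^[k] x = x ∧ ∃ p, 1 ≤ p ∧ f^[p] x = x}).ncard : ℝ)
        ≤ a ^ k * (N:ℝ)^m := by
    intro k hk
    set S := {x : ℤ → Fin N | shift^[k] x = x ∧ ∃ p, 1 ≤ p ∧ f^[p] x = x} with hS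
    set q := k / m with hq
    set r := k % m with hr
    have hqr : m * q + r = k := Nat.div_add_mod k m
    have hrm : r < m := Nat.mod_lt k (by omega)
    -- injection
    have hcard : Nat.card S ≤ (N^m - 1)^q * N^r := by
      classical
      let T := (Fin q → {u : Fin m → Fin N // u ≠ w}) × (Fin r → Fin N)
      have hT : Nat.card T = (N^m - 1)^q * N^r := by
        simp only [T, Nat.card_eq_fintype_card, Fintype.card_prod, Fintype.card_fun,
          Fintype.card_fin]
        congr 2
        have : Fintype.card {u : Fin m → Fin N // u ≠ w}
            = Fintype.card (Fin m → Fin N) - Fintype.card {u : Fin m → Fin N // u = w} :=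
          Fintype.card_subtype_compl _
        rw [this, Fintype.card_subtype_eq, Fintype.card_fun, Fintype.card_fin,
          Fintype.card_fin]
      rw [← hT]
      have hblock : ∀ x ∈ S, ∀ i : ℕ, (fun j : Fin m => x ((i*m : ℕ) + (j:ℕ))) ≠ w := by
        intro x hx i hcon
        obtain ⟨hx1, hx2⟩ := hx
        exact hw x ⟨k, hk, hx1⟩ hx2 ((i*m : ℕ) : ℤ) (fun j => congrFun hcon j)
      refine Nat.card_le_card_of_injective
        (fun x => (⟨fun i => ⟨fun j => x.1 (((i:ℕ)*m : ℕ) + (j:ℕ)),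
            hblock x.1 x.2 i⟩, fun j => x.1 ((q*m : ℕ) + (j:ℕ))⟩ : T)) ?_
      rintro ⟨x, hx⟩ ⟨y, hy⟩ hxy
      simp only [T, Prod.mk.injEq, Subtype.mk.injEq] at hxy
      obtain ⟨h1, h2⟩ := hxy
      have hfin : ∀ t : ℕ, t < k → x (t : ℤ) = y (t : ℤ) := by
        intro t ht
        by_cases htq : t < q * m
        · have hi : t / m < q := (Nat.div_lt_iff_lt_mul (by omega)).2 htq
          have hj : t % m < m := Nat.mod_lt t (by omega)
          have hbe := Subtype.ext_iff.mp (congrFun h1 ⟨t/m, hi⟩)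
          have heq : x (((t/m*m : ℕ) : ℤ) + ((t%m : ℕ) : ℤ))
              = y (((t/m*m : ℕ) : ℤ) + ((t%m : ℕ) : ℤ)) := congrFun hbe ⟨t % m, hj⟩
          have ht' : t/m*m + t%m = t := by
            rw [mul_comm]; exact Nat.div_add_mod t m
          have hcast : ((t/m*m : ℕ) : ℤ) + ((t%m : ℕ) : ℤ) = (t : ℤ) := by
            exact_mod_cast congrArg (Nat.cast : ℕ → ℤ) ht'
          rwa [hcast] at heq
        · have hge := Nat.le_of_not_lt htq
          have hcm : q*m = m*q := mul_comm q m
          have hj : t - q*m < r := by omega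
          have heq : x (((q*m : ℕ) : ℤ) + ((t - q*m : ℕ) : ℤ))
              = y (((q*m : ℕ) : ℤ) + ((t - q*m : ℕ) : ℤ)) := congrFun h2 ⟨t - q*m, hj⟩
          have ht' : q*m + (t - q*m) = t := Nat.add_sub_cancel' (Nat.le_of_not_lt htq)
          have hcast : ((q*m : ℕ) : ℤ) + ((t - q*m : ℕ) : ℤ) = (t : ℤ) := by
            exact_mod_cast congrArg (Nat.cast : ℕ → ℤ) ht'
          rwa [hcast] at heq
      have hxall : ∀ n : ℤ, x n = y n := by
        intro n
        rw [periodic_emod hk hx.1 n, periodic_emod hk hy.1 n]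
        have hk0 : (k:ℤ) ≠ 0 := by exact_mod_cast Nat.one_le_iff_ne_zero.mp hk
        have h0 : 0 ≤ n % k := Int.emod_nonneg n hk0
        have hlt : n % k < k := Int.emod_lt_of_pos n (by exact_mod_cast (by omega : 0 < k))
        have := hfin (n % k).toNat (by omega)
        rwa [Int.toNat_of_nonneg h0] at this
      exact Subtype.ext (funext hxall)
    -- now to real
    have hncard : (S.ncard : ℝ) ≤ ((N^m - 1 : ℕ) : ℝ)^q * (N:ℝ)^r := by
      rw [← Nat.card_coe_set_eq]
      exact_mod_cast hcard
    have hcast : ((N^m - 1 : ℕ) : ℝ) = (N:ℝ)^m - 1 := by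
      have : 1 ≤ N^m := Nat.one_le_pow _ _ (by omega)
      push_cast [this]; ring
    rw [hcast] at hncard
    refine le_trans hncard ?_
    have hstep1 : ((N:ℝ)^m - 1)^q = a ^ (m * q) := by
      rw [ha_def, ← Real.rpow_natCast (((N:ℝ)^m - 1) ^ ((m:ℝ)⁻¹)) (m*q),
        ← Real.rpow_mul (by linarith)]
      push_cast
      rw [← mul_assoc, inv_mul_cancel₀ (ne_of_gt hmR), one_mul,
        Real.rpow_natCast]
    have hstep2 : a ^ (m * q) ≤ a ^ k := pow_le_pow_right₀ ha1 (by omega)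
    have hstep3 : (N:ℝ)^r ≤ (N:ℝ)^m := pow_le_pow_right₀ (by linarith) (le_of_lt hrm)
    calc ((N:ℝ)^m - 1)^q * (N:ℝ)^r = a ^ (m*q) * (N:ℝ)^r := by rw [hstep1]
      _ ≤ a ^ k * (N:ℝ)^m := by
          apply mul_le_mul hstep2 hstep3 (by positivity) (by positivity)
  -- limsup argument
  set c : ℕ → ℝ := fun k =>
      ((({x : ℤ → Fin N | shift^[k] x = x ∧ ∃ p, 1 ≤ p ∧ f^[p] x = x}).ncard : ℕ) : ℝ)
        ^ ((k : ℝ)⁻¹) with hc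
  set g : ℕ → ℝ := fun k => a * ((N:ℝ)^m) ^ ((k:ℝ)⁻¹) with hg
  have hle : ∀ᶠ k in Filter.atTop, c k ≤ g k := by
    filter_upwards [Filter.eventually_ge_atTop 1] with k hk
    have hkR : (0:ℝ) < (k:ℝ) := by exact_mod_cast hk
    have h1 : c k ≤ (a ^ k * (N:ℝ)^m) ^ ((k:ℝ)⁻¹) :=
      Real.rpow_le_rpow (by positivity) (key k hk) (by positivity)
    refine le_trans h1 ?_
    rw [Real.mul_rpow (by positivity) (by positivity)]
    have : (a ^ k) ^ ((k:ℝ)⁻¹) = a := by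
      rw [← Real.rpow_natCast a k, ← Real.rpow_mul ha0,
        mul_inv_cancel₀ (ne_of_gt hkR), Real.rpow_one]
    rw [this]
  have hgt : Filter.Tendsto g Filter.atTop (nhds a) := by
    have hb : (0:ℝ) < (N:ℝ)^m := by positivity
    have h1 : Filter.Tendsto (fun k : ℕ => ((k:ℝ))⁻¹) Filter.atTop (nhds 0) :=
      tendsto_inv_atTop_zero.comp tendsto_natCast_atTop_atTop
    have h2 : Filter.Tendsto (fun k : ℕ => ((N:ℝ)^m) ^ ((k:ℝ)⁻¹)) Filter.atTop (nhds 1) := by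
      have := ((Real.continuousAt_const_rpow (a := (N:ℝ)^m) (b := (0:ℝ)) hb.ne').tendsto).comp h1
      simpa [Function.comp_def] using this
    have := h2.const_mul a
    simpa using this
  have hlimg : Filter.limsup g Filter.atTop = a := hgt.limsup_eq
  have hls : Filter.limsup c Filter.atTop ≤ a := by
    rw [← hlimg]
    refine Filter.limsup_le_limsup hle ?_ ?_
    · apply Filter.IsBoundedUnder.isCoboundedUnder_le
      refine ⟨0, Filter.eventually_map.2 ?_⟩
      filter_upwards with k
      positivity
    · exact hgt.isBoundedUnder_le
  calc Filter.limsup c Filter.atTop ≤ a := hls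
    _ < N := haN
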